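/- Let i ≥ 1 and r be nonnegative integers such that r−i > 0 is even. Then every Z ∈ Val_i^r is simple, i.e. Z(P) = 0 for every lattice polygon P of dimension at most 1. -/

import Mathlib

open MvPolynomial Matrix

noncomputable section

abbrev Vec : Type := Fin 2 → ℝ
abbrev IVec : Type := Fin 2 → ℤ

/-- The point of `ℝ²` corresponding to a lattice point. -/
def toVec (v : IVec) : Vec := fun i => (v i : ℝ)

/-- A lattice polygon: the convex hull of a nonempty finite set of lattice points. -/
def IsLatticePolygon (P : Set Vec) : Prop :=
  ∃ S : Finset IVec, S.Nonempty ∧ P = convexHull ℝ (toVec '' (S : Set IVec))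

/-- The type of lattice polygons in the plane. -/
abbrev LP : Type := {P : Set Vec // IsLatticePolygon P}

/-- The action of an integer matrix `φ` on polynomials, `f ↦ f ∘ φ*`. -/
def polyAct (φ : Matrix (Fin 2) (Fin 2) ℤ) (f : MvPolynomial (Fin 2) ℝ) :
    MvPolynomial (Fin 2) ℝ :=
  aeval (fun i => ∑ j, (φ j i : ℝ) • X j) f

def matVecMap (φ : Matrix (Fin 2) (Fin 2) ℤ) (v : Vec) : Vec :=
  (φ.map fun a => (a : ℝ)) *ᵥ v

/-- The image `φ P` of a subset of the plane under an integer matrix. -/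
def matSet (φ : Matrix (Fin 2) (Fin 2) ℤ) (P : Set Vec) : Set Vec := matVecMap φ '' P

/-- The translate `P + v` of a subset of the plane by a lattice vector. -/
def translateSet (v : IVec) (P : Set Vec) : Set Vec := (fun p => p + toVec v) '' P

/-- The dilate `m P`. -/
def dilateSet (m : ℕ) (P : Set Vec) : Set Vec := (fun p => (m : ℝ) • p) '' P

/-- The linear polynomial `a x + b y` associated with `v = (a, b)`. -/
def linPoly (v : IVec) : MvPolynomial (Fin 2) ℝ := ∑ i, (v i : ℝ) • X i

/-- The valuation property on lattice polygons. -/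
def IsValuation {M : Type*} [AddCommMonoid M] (Z : LP → M) : Prop :=
  ∀ P Q U I : LP, U.val = P.val ∪ Q.val → I.val = P.val ∩ Q.val →
    Z P + Z Q = Z U + Z I

/-- `GL₂(ℤ)` equivariance: `Z(φ P) = Z(P) ∘ φ*`. -/
def IsEquivariant (Z : LP → MvPolynomial (Fin 2) ℝ) : Prop :=
  ∀ φ : Matrix (Fin 2) (Fin 2) ℤ, IsUnit φ.det →
    ∀ P Q : LP, Q.val = matSet φ P.val → Z Q = polyAct φ (Z P)

/-- `A j = Z^{r-j}` is the family of associated valuations of `Z`, witnessing that `Z`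
is translatively polynomial of rank `r`. -/
def IsAssocFamily (r : ℕ) (Z : LP → MvPolynomial (Fin 2) ℝ)
    (A : ℕ → LP → MvPolynomial (Fin 2) ℝ) : Prop :=
  A 0 = Z ∧ (∀ j, j ≤ r → ∀ P, (A j P).IsHomogeneous (r - j)) ∧
    ∀ (P Q : LP) (v : IVec), Q.val = translateSet v P.val →
      Z Q = ∑ j ∈ Finset.range (r + 1), ((j.factorial : ℝ)⁻¹) • (A j P * linPoly v ^ j)

def IsTranslativelyPolynomial (r : ℕ) (Z : LP → MvPolynomial (Fin 2) ℝ) : Prop :=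
  ∃ A, IsAssocFamily r Z A

/-- `i`-homogeneity: `Z(mP) = m^i Z(P)` for all integers `m ≥ 0`. -/
def IsHomogeneousVal (i : ℕ) (Z : LP → MvPolynomial (Fin 2) ℝ) : Prop :=
  ∀ (m : ℕ) (P Q : LP), Q.val = dilateSet m P.val → Z Q = (m : ℝ) ^ i • Z P

/-- Membership in `Val_i^r`. -/
def MemVal (i r : ℕ) (Z : LP → MvPolynomial (Fin 2) ℝ) : Prop :=
  IsValuation Z ∧ (∀ P, (Z P).IsHomogeneous r) ∧ IsEquivariant Z ∧
    IsTranslativelyPolynomial r Z ∧ IsHomogeneousVal i Z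

/-- The space `Val_i^r` (the set `{Z | MemVal i r Z}` is a linear subspace, so it
coincides with its span). -/
def ValIR (i r : ℕ) : Submodule ℝ (LP → MvPolynomial (Fin 2) ℝ) :=
  Submodule.span ℝ {Z | MemVal i r Z}

/-- The number of partitions of `r` into parts `2` and `3`. -/
def p23 (r : ℕ) : ℕ :=
  (((Finset.range (r + 1)) ×ˢ (Finset.range (r + 1))).filter
    fun kl => 2 * kl.1 + 3 * kl.2 = r).card

def iz0 : IVec := ![0, 0]
def ie1 : IVec := ![1, 0]
def ie2 : IVec := ![0, 1]

/-- The standard triangle `T△ = conv{0, e₁, e₂}` as a lattice polygon. -/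
def stdTriangle : LP :=
  ⟨convexHull ℝ (toVec '' (({iz0, ie1, ie2} : Finset IVec) : Set IVec)),
    {iz0, ie1, ie2}, by simp, rfl⟩

/-- The segment `conv{0, e₁}` as a lattice polygon. -/
def segLP : LP :=
  ⟨convexHull ℝ (toVec '' (({iz0, ie1} : Finset IVec) : Set IVec)),
    {iz0, ie1}, by simp, rfl⟩

/-- `P` has dimension at most one. -/
def DimAtMostOne (P : Set Vec) : Prop := Module.rank ℝ (vectorSpan ℝ P) ≤ 1

/-- A simple valuation vanishes on polygons of dimension at most one. -/
def IsSimpleVal {M : Type*} [Zero M] (Z : LP → M) : Prop :=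
  ∀ P : LP, DimAtMostOne P.val → Z P = 0

/-- The unimodular triangle `φ T△ + v`. -/
def uniTri (φ : Matrix (Fin 2) (Fin 2) ℤ) (v : IVec) : Set Vec :=
  translateSet v (matSet φ stdTriangle.val)

def IsUnimodularTriangle (P : Set Vec) : Prop :=
  ∃ φ v, IsUnit (Matrix.det φ) ∧ P = uniTri φ v

/-- A unimodular triangulation of `P`, given by triangles `φᵢ T△ + vᵢ`, `1 ≤ i ≤ m`:
pairwise distinct unimodular triangles covering `P` such that any two of them intersect
in a common (possibly empty) face. -/
def IsUnimodularTriangulation (P : LP) (m : ℕ)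
    (T : Fin m → Matrix (Fin 2) (Fin 2) ℤ) (v : Fin m → IVec) : Prop :=
  (∀ i, IsUnit (T i).det) ∧
    Function.Injective (fun i => uniTri (T i) (v i)) ∧
    P.val = ⋃ i, uniTri (T i) (v i) ∧
    ∀ i j, IsExtreme ℝ (uniTri (T i) (v i)) (uniTri (T i) (v i) ∩ uniTri (T j) (v j))

/-- The group `G` of unimodular matrices `φ` such that `T△ = φ T△ + v` for some `v ∈ ℤ²`. -/
def memG (φ : Matrix (Fin 2) (Fin 2) ℤ) : Prop :=
  IsUnit φ.det ∧ ∃ v : IVec, stdTriangle.val = translateSet v (matSet φ stdTriangle.val)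

def GInvariant (f : MvPolynomial (Fin 2) ℝ) : Prop := ∀ φ, memG φ → polyAct φ f = f

def swapMat : Matrix (Fin 2) (Fin 2) ℤ := !![0, 1; 1, 0]
def reflMat1 : Matrix (Fin 2) (Fin 2) ℤ := !![1, 0; 0, -1]
def reflMat2 : Matrix (Fin 2) (Fin 2) ℤ := !![-1, 0; 0, 1]
def negIdMat : Matrix (Fin 2) (Fin 2) ℤ := !![-1, 0; 0, -1]

/-- Invariance under the group `D` generated by the coordinate swap and the reflection
at the first coordinate axis. -/
def DInvariant (f : MvPolynomial (Fin 2) ℝ) : Prop :=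
  polyAct swapMat f = f ∧ polyAct reflMat1 f = f

/-- Invariance under the group `H` generated by the coordinate swap and `-Id`. -/
def HInvariant (f : MvPolynomial (Fin 2) ℝ) : Prop :=
  polyAct swapMat f = f ∧ polyAct negIdMat f = f

/-- The space `ℝ[x,y]_r^G` of `G`-invariant `r`-homogeneous polynomials (the defining
set is a linear subspace, so it coincides with its span). -/
def RG (r : ℕ) : Submodule ℝ (MvPolynomial (Fin 2) ℝ) :=
  Submodule.span ℝ {f | f.IsHomogeneous r ∧ GInvariant f}

abbrev PS : Type := MvPowerSeries (Fin 2) ℝ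

/-- The power series `exp(a x + b y)` for `v = (a, b) ∈ ℤ²`. -/
def expv (v : IVec) : PS := fun d =>
  ((v 0 : ℝ) ^ d 0 * (v 1 : ℝ) ^ d 1) / ((Nat.factorial (d 0) : ℝ) * (Nat.factorial (d 1) : ℝ))

/-- The degree-`n` homogeneous summand of a formal power series, as a polynomial. -/
def psHom (n : ℕ) (f : PS) : MvPolynomial (Fin 2) ℝ :=
  ∑ i ∈ Finset.range (n + 1),
    monomial (Finsupp.single 0 i + Finsupp.single 1 (n - i))
      (MvPowerSeries.coeff (Finsupp.single 0 i + Finsupp.single 1 (n - i)) f)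

/-- The action `f ↦ f ∘ φ*` on formal power series. -/
def psAct (φ : Matrix (Fin 2) (Fin 2) ℤ) (f : PS) : PS := fun d =>
  MvPolynomial.coeff d (polyAct φ (psHom (d 0 + d 1) f))

/-- The substitution `f(x,y) ↦ f(c x, c y)` on formal power series. -/
def psRescale (c : ℝ) (f : PS) : PS := fun d => c ^ (d 0 + d 1) * MvPowerSeries.coeff d f

/-- Translative exponentiality: `Z(P + v) = e^v Z(P)`. -/
def IsTransExp (Z : LP → PS) : Prop :=
  ∀ (P Q : LP) (v : IVec), Q.val = translateSet v P.val → Z Q = expv v * Z P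

def IsEquivariantPS (Z : LP → PS) : Prop :=
  ∀ φ : Matrix (Fin 2) (Fin 2) ℤ, IsUnit φ.det →
    ∀ P Q : LP, Q.val = matSet φ P.val → Z Q = psAct φ (Z P)

/-- `d`-dilativity: `Z(mP)(x,y) = m^{-d} Z(P)(mx, my)` for all integers `m > 0`. -/
def IsDilative (d : ℤ) (Z : LP → PS) : Prop :=
  ∀ m : ℕ, 0 < m → ∀ P Q : LP, Q.val = dilateSet m P.val →
    Z Q = ((m : ℝ) ^ (-d)) • psRescale (m : ℝ) (Z P)

/-- Membership in `Val̄`. -/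
def MemValBar (Z : LP → PS) : Prop := IsValuation Z ∧ IsEquivariantPS Z ∧ IsTransExp Z

/-- Membership in `Val̄_d`. -/
def MemValBarD (d : ℤ) (Z : LP → PS) : Prop := MemValBar Z ∧ IsDilative d Z

def ValBar : Submodule ℝ (LP → PS) := Submodule.span ℝ {Z | MemValBar Z}

def ValBarD (d : ℤ) : Submodule ℝ (LP → PS) := Submodule.span ℝ {Z | MemValBarD d Z}

/-- The `r`-th discrete moment polynomial `L^r(P) = (1/r!) Σ_{v ∈ P ∩ ℤ²} v^r`. -/
def discMoment (r : ℕ) (P : Set Vec) : MvPolynomial (Fin 2) ℝ :=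
  ((r.factorial : ℝ)⁻¹) • ∑ᶠ v ∈ {v : IVec | toVec v ∈ P}, linPoly v ^ r

/-- `L i = L_i^r` is the family of Ehrhart coefficients of the `r`-th discrete moment
polynomial: `L^r(mP) = Σ_{i=0}^{r+2} m^i L_i^r(P)` for all integers `m ≥ 0`. -/
def IsEhrhartFamily (r : ℕ) (L : ℕ → LP → MvPolynomial (Fin 2) ℝ) : Prop :=
  (∀ i P, (L i P).IsHomogeneous r) ∧
    ∀ (P : LP) (m : ℕ) (Q : LP), Q.val = dilateSet m P.val →
      discMoment r Q.val = ∑ i ∈ Finset.range (r + 3), (m : ℝ) ^ i • L i P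

end

noncomputable section

-- Part A: scalar polynomial tools

lemma natRoots_zero (p : Polynomial ℝ) (h : ∀ n : ℕ, p.eval (n : ℝ) = 0) : p = 0 := by
  apply Polynomial.eq_zero_of_infinite_isRoot
  refine (Set.infinite_range_of_injective (f := fun n : ℕ => (n : ℝ)) ?_).mono ?_
  · exact fun a b hab => Nat.cast_injective hab
  · rintro x ⟨n, rfl⟩; exact h n

lemma natRoots_zero' (p : Polynomial ℝ) (h : ∀ n : ℕ, p.eval ((n : ℝ) + 1) = 0) : p = 0 := by
  apply Polynomial.eq_zero_of_infinite_isRoot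
  refine (Set.infinite_range_of_injective (f := fun n : ℕ => (n : ℝ) + 1) ?_).mono ?_
  · intro a b hab
    have hab' : (a : ℝ) + 1 = (b : ℝ) + 1 := hab
    have : (a : ℝ) = b := by linarith
    exact_mod_cast this
  · rintro x ⟨n, rfl⟩; exact h n

lemma powsum_zero (N : ℕ) (c : ℕ → ℝ)
    (h : ∀ n : ℕ, ∑ j ∈ Finset.range (N + 1), c j * (n : ℝ) ^ j = 0) :
    ∀ j, j ≤ N → c j = 0 := by
  have hp : (∑ j ∈ Finset.range (N + 1), Polynomial.C (c j) * Polynomial.X ^ j) = 0 := by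
    apply natRoots_zero
    intro n
    rw [Polynomial.eval_finset_sum]
    simpa using h n
  intro j hj
  have h2 := congrArg (fun p : Polynomial ℝ => p.coeff j) hp
  simp only [Polynomial.finset_sum_coeff, Polynomial.coeff_C_mul, Polynomial.coeff_X_pow,
    Polynomial.coeff_zero, mul_ite, mul_one, mul_zero] at h2
  rwa [Finset.sum_ite_eq (Finset.range (N + 1)) j c, if_pos (Finset.mem_range.mpr (by omega))] at h2

lemma exists_faulhaber (a : ℕ) : ∃ F : Polynomial ℝ, ∀ n : ℕ,
    F.eval (n : ℝ) = ∑ l ∈ Finset.range n, (l : ℝ) ^ a := by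
  refine ⟨∑ i ∈ Finset.range (a + 1),
    Polynomial.C (((bernoulli i * ((a + 1).choose i) / (a + 1) : ℚ) : ℝ)) * Polynomial.X ^ (a + 1 - i), ?_⟩
  intro n
  have h := sum_range_pow n a
  have h' := congrArg (fun q : ℚ => (q : ℝ)) h
  rw [Polynomial.eval_finset_sum]
  simp only [Polynomial.eval_mul, Polynomial.eval_C, Polynomial.eval_pow, Polynomial.eval_X]
  push_cast at h' ⊢
  rw [h']
  apply Finset.sum_congr rfl
  intro i _
  ring

-- Part B : MvPolynomial tools

lemma eval_aeval' (g : Fin 2 → MvPolynomial (Fin 2) ℝ) (x : Fin 2 → ℝ)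
    (p : MvPolynomial (Fin 2) ℝ) :
    eval x (aeval g p) = eval (fun i => eval x (g i)) p := by
  induction p using MvPolynomial.induction_on with
  | C a => simp
  | add p q hp hq => simp only [_root_.map_add, hp, hq]
  | mul_X p i hp => simp only [_root_.map_mul, aeval_X, hp, eval_X]

lemma hom_sum_univ {q : MvPolynomial (Fin 2) ℝ} {r : ℕ} (hq : q.IsHomogeneous r)
    {d : Fin 2 →₀ ℕ} (hd : d ∈ q.support) : ∑ i : Fin 2, d i = r := by
  have h1 : (Finsupp.weight 1) d = r := hq (mem_support_iff.mp hd)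
  have h2 : Finsupp.degree d = r := by
    rw [Finsupp.degree_eq_weight_one]; exact h1
  rw [← h2, Finsupp.degree]
  exact (Finset.sum_subset (Finset.subset_univ _)
    (fun i _ hi => Finsupp.notMem_support_iff.mp hi)).symm

lemma eval_hom_smul {q : MvPolynomial (Fin 2) ℝ} {r : ℕ} (hq : q.IsHomogeneous r)
    (s : ℝ) (x : Fin 2 → ℝ) :
    eval (fun i => s * x i) q = s ^ r * eval x q := by
  rw [eval_eq', eval_eq', Finset.mul_sum]
  apply Finset.sum_congr rfl
  intro d hd
  rw [show (∏ i : Fin 2, (s * x i) ^ d i) = (∏ i : Fin 2, s ^ d i) * ∏ i : Fin 2, x i ^ d i by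
    rw [← Finset.prod_mul_distrib]; apply Finset.prod_congr rfl; intro i _; rw [mul_pow]]
  rw [Finset.prod_pow_eq_pow_sum, hom_sum_univ hq hd]
  ring

lemma exists_univar (q : MvPolynomial (Fin 2) ℝ) (a0 a1 b0 b1 : ℝ) :
    ∃ u : Polynomial ℝ, ∀ t : ℝ, u.eval t = eval ![a0 + a1 * t, b0 + b1 * t] q := by
  induction q using MvPolynomial.induction_on with
  | C a => exact ⟨Polynomial.C a, by simp⟩
  | add p q hp hq =>
    obtain ⟨u, hu⟩ := hp; obtain ⟨w, hw⟩ := hq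
    exact ⟨u + w, by simp [hu, hw]⟩
  | mul_X p i hp =>
    obtain ⟨u, hu⟩ := hp
    refine ⟨u * (Polynomial.C (if i = 0 then a0 else b0) +
      Polynomial.C (if i = 0 then a1 else b1) * Polynomial.X), ?_⟩
    intro t
    fin_cases i <;> simp [hu]

lemma vanishV (N : ℕ) (w : ℕ → MvPolynomial (Fin 2) ℝ)
    (h : ∀ n : ℕ, ∑ j ∈ Finset.range (N + 1), (n : ℝ) ^ j • w j = 0) :
    ∀ j, j ≤ N → w j = 0 := by
  intro j hj
  ext d
  have hc : ∀ n : ℕ, ∑ j ∈ Finset.range (N + 1), coeff d (w j) * (n : ℝ) ^ j = 0 := by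
    intro n
    have h2 := congrArg (coeff d) (h n)
    rw [MvPolynomial.coeff_sum] at h2
    simpa [MvPolynomial.coeff_smul, mul_comm] using h2
  simpa using powsum_zero N (fun j => coeff d (w j)) hc j hj

lemma lin_pow (x y : ℝ) (j : ℕ) :
    (x • (X 0 : MvPolynomial (Fin 2) ℝ) + y • X 1) ^ j
      = ∑ m ∈ Finset.range (j + 1),
          (x ^ m * y ^ (j - m) * (j.choose m : ℝ)) • ((X 0 : MvPolynomial (Fin 2) ℝ) ^ m * X 1 ^ (j - m)) := by
  rw [add_pow]
  apply Finset.sum_congr rfl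
  intro m hm
  rw [show ((j.choose m : ℕ) : MvPolynomial (Fin 2) ℝ) = C ((j.choose m : ℕ) : ℝ) by push_cast; rfl]
  simp only [MvPolynomial.smul_eq_C_mul, mul_pow, ← C_pow, C_mul]
  ring
-- Part B2: polyAct lemmas

lemma polyAct_zero (φ : Matrix (Fin 2) (Fin 2) ℤ) : polyAct φ 0 = 0 := by
  simp [polyAct]

lemma eval_polyAct (φ : Matrix (Fin 2) (Fin 2) ℤ) (x : Fin 2 → ℝ)
    (p : MvPolynomial (Fin 2) ℝ) :
    eval x (polyAct φ p) = eval (fun i => ∑ j, (φ j i : ℝ) * x j) p := by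
  have h : (fun i : Fin 2 => eval x (∑ j, ((φ j i : ℤ) : ℝ) • X j))
      = fun i => ∑ j, (φ j i : ℝ) * x j := by
    funext i; simp [MvPolynomial.smul_eq_C_mul]
  rw [polyAct, eval_aeval', h]

lemma shear_invariant (r : ℕ) (q : MvPolynomial (Fin 2) ℝ) (hq : q.IsHomogeneous r)
    (hs : ∀ n : ℤ, polyAct !![1, n; 0, 1] q = q) :
    ∃ c : ℝ, q = c • (X 0 : MvPolynomial (Fin 2) ℝ) ^ r := by
  have key : ∀ (n : ℤ) (a b : ℝ), eval ![a, (n : ℝ) * a + b] q = eval ![a, b] q := by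
    intro n a b
    have h1 := congrArg (eval ![a, b]) (hs n)
    rw [eval_polyAct] at h1
    have h2 : (fun i : Fin 2 => ∑ j, ((!![1, n; 0, 1] : Matrix (Fin 2) (Fin 2) ℤ) j i : ℝ) * (![a, b] j))
        = ![a, (n : ℝ) * a + b] := by
      funext i
      fin_cases i <;> simp [Fin.sum_univ_two]
    rw [h2] at h1
    exact h1
  set c := eval ![1, 0] q with hc
  have h1const : ∀ t : ℝ, eval ![1, t] q = c := by
    obtain ⟨u, hu⟩ := exists_univar q 1 0 0 1
    have hu' : ∀ t : ℝ, u.eval t = eval ![1, t] q := by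
      intro t
      have hv : ![(1 : ℝ) + 0 * t, 0 + 1 * t] = ![1, t] := by
        funext i; fin_cases i <;> norm_num
      rw [hu t, hv]
    have hz : (u - Polynomial.C c) = 0 := by
      apply natRoots_zero
      intro n
      have h3 := key n 1 0
      norm_num at h3
      simp [hu', h3, hc]
    intro t
    have h4 := congrArg (Polynomial.eval t) hz
    simp at h4
    rw [← hu' t]
    linarith [h4]
  have hscale : ∀ (s : ℝ) (x : Fin 2 → ℝ), eval (fun i => s * x i) q = s ^ r * eval x q :=
    fun s x => eval_hom_smul hq s x
  have hmain : ∀ a b : ℝ, eval ![a, b] q = c * a ^ r := by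
    have hne : ∀ a b : ℝ, a ≠ 0 → eval ![a, b] q = c * a ^ r := by
      intro a b ha
      have h5 : (fun i : Fin 2 => a * (![1, b / a] i)) = ![a, b] := by
        funext i
        fin_cases i <;> simp
        field_simp
      have h6 := hscale a ![1, b / a]
      rw [h5, h1const] at h6
      rw [h6]; ring
    intro a b
    rcases eq_or_ne a 0 with rfl | ha
    · obtain ⟨u, hu⟩ := exists_univar q 0 1 b 0
      have hu' : ∀ t : ℝ, u.eval t = eval ![t, b] q := by
        intro t
        have hv : ![(0 : ℝ) + 1 * t, b + 0 * t] = ![t, b] := by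
          funext i; fin_cases i <;> norm_num
        rw [hu t, hv]
      have hz : (u - Polynomial.C c * Polynomial.X ^ r) = 0 := by
        apply natRoots_zero'
        intro n
        have h7 := hne ((n : ℝ) + 1) b (by positivity)
        simp [hu', h7]
      have h8 := congrArg (Polynomial.eval 0) hz
      simp only [Polynomial.eval_sub, Polynomial.eval_mul, Polynomial.eval_C,
        Polynomial.eval_pow, Polynomial.eval_X, Polynomial.eval_zero] at h8
      rw [← hu' 0]
      linarith [h8]
    · exact hne a b ha
  refine ⟨c, MvPolynomial.funext fun x => ?_⟩
  have hx : ![x 0, x 1] = x := by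
    funext i; fin_cases i <;> rfl
  rw [← hx, hmain, MvPolynomial.smul_eval]
  simp

lemma polyAct_negId {r : ℕ} {p : MvPolynomial (Fin 2) ℝ} (hp : p.IsHomogeneous r) :
    polyAct negIdMat p = ((-1 : ℝ) ^ r) • p := by
  apply MvPolynomial.funext
  intro x
  rw [eval_polyAct, MvPolynomial.smul_eval]
  have h1 : (fun i : Fin 2 => ∑ j, ((negIdMat j i : ℤ) : ℝ) * x j) = fun i => (-1) * x i := by
    funext i
    fin_cases i <;> simp [negIdMat, Fin.sum_univ_two]
  rw [h1, eval_hom_smul hp]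
-- Part C: the scalar core lemma

lemma sum_range_add' {M : Type*} [AddCommMonoid M] (f : ℕ → M) (m n : ℕ) :
    ∑ l ∈ Finset.range (m + n), f l
      = (∑ l ∈ Finset.range m, f l) + ∑ l ∈ Finset.range n, f (m + l) := by
  induction n with
  | zero => simp
  | succ k ih =>
    rw [← Nat.add_assoc, Finset.sum_range_succ, ih, Finset.sum_range_succ]
    rw [add_assoc]

def GAux (M : ℕ) (e : ℕ → ℕ → ℝ) (s t : ℝ) : ℝ :=
  ∑ j ∈ Finset.range (M + 1), ∑ m ∈ Finset.range (j + 1), e j m * s ^ m * t ^ (j - m)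

def PsiAux (M : ℕ) (e : ℕ → ℕ → ℝ) (F : ℕ → Polynomial ℝ) (s t : ℝ) : ℝ :=
  ∑ j ∈ Finset.range (M + 1), ∑ m ∈ Finset.range (j + 1), e j m * (F m).eval s * t ^ (j - m)

lemma core2 (i M : ℕ) (hi : 1 ≤ i) (e : ℕ → ℕ → ℝ) (g : ℤ → ℤ → ℝ)
    (hg : ∀ x y : ℤ, g x y = ∑ j ∈ Finset.range (M + 1), ∑ m ∈ Finset.range (j + 1),
      e j m * (x : ℝ) ^ m * (y : ℝ) ^ (j - m))
    (H1 : ∀ (k : ℕ) (x y : ℤ), ∑ l ∈ Finset.range k, g (k * x + l) (k * y) = (k : ℝ) ^ i * g x y)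
    (H2 : ∀ x y : ℤ, g (-x - 1) (-y) = (-1 : ℝ) ^ i * g x y) :
    ∀ x y : ℤ, g x y = 0 := by
  choose F hF using exists_faulhaber
  have hGg : ∀ x y : ℤ, GAux M e (x : ℝ) (y : ℝ) = g x y := by
    intro x y; rw [hg, GAux]
  have hΨnat : ∀ (s : ℕ) (t : ℤ),
      PsiAux M e F (s : ℝ) (t : ℝ) = ∑ l ∈ Finset.range s, g (l : ℤ) t := by
    intro s t
    have h1 : ∀ l : ℕ, g (l : ℤ) t = ∑ j ∈ Finset.range (M + 1), ∑ m ∈ Finset.range (j + 1),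
        e j m * (l : ℝ) ^ m * (t : ℝ) ^ (j - m) := by
      intro l
      rw [hg]
      norm_num
    calc PsiAux M e F (s : ℝ) (t : ℝ)
        = ∑ j ∈ Finset.range (M + 1), ∑ m ∈ Finset.range (j + 1),
            ∑ l ∈ Finset.range s, e j m * (l : ℝ) ^ m * (t : ℝ) ^ (j - m) := by
          rw [PsiAux]
          apply Finset.sum_congr rfl; intro j _
          apply Finset.sum_congr rfl; intro m _
          rw [hF m s, Finset.mul_sum, Finset.sum_mul]
      _ = ∑ j ∈ Finset.range (M + 1), ∑ l ∈ Finset.range s,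
            ∑ m ∈ Finset.range (j + 1), e j m * (l : ℝ) ^ m * (t : ℝ) ^ (j - m) := by
          apply Finset.sum_congr rfl; intro j _
          rw [Finset.sum_comm]
      _ = ∑ l ∈ Finset.range s, ∑ j ∈ Finset.range (M + 1),
            ∑ m ∈ Finset.range (j + 1), e j m * (l : ℝ) ^ m * (t : ℝ) ^ (j - m) := by
          rw [Finset.sum_comm]
      _ = ∑ l ∈ Finset.range s, g (l : ℤ) t := by
          apply Finset.sum_congr rfl; intro l _
          rw [h1 l]
  have hF0 : ∀ a, (F a).eval 0 = 0 := by
    intro a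
    simpa using hF a 0
  have hΨ0 : ∀ t : ℝ, PsiAux M e F 0 t = 0 := by
    intro t
    simp [PsiAux, hF0]
  have hFstep : ∀ (a : ℕ) (s : ℝ), (F a).eval (s + 1) = (F a).eval s + s ^ a := by
    intro a
    have hpz : ((F a).comp (Polynomial.X + 1) - F a - Polynomial.X ^ a) = 0 := by
      apply natRoots_zero
      intro n
      simp only [Polynomial.eval_sub, Polynomial.eval_comp, Polynomial.eval_add,
        Polynomial.eval_X, Polynomial.eval_one, Polynomial.eval_pow]
      rw [show ((n : ℝ) + 1) = ((n + 1 : ℕ) : ℝ) by push_cast; ring, hF, hF,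
        Finset.sum_range_succ]
      ring
    intro s
    have h2 := congrArg (Polynomial.eval s) hpz
    simp only [Polynomial.eval_sub, Polynomial.eval_comp, Polynomial.eval_add,
      Polynomial.eval_X, Polynomial.eval_one, Polynomial.eval_pow, Polynomial.eval_zero] at h2
    linarith
  have hΨstep : ∀ (s t : ℝ), PsiAux M e F (s + 1) t = PsiAux M e F s t + GAux M e s t := by
    intro s t
    rw [PsiAux, PsiAux, GAux, ← Finset.sum_add_distrib]
    apply Finset.sum_congr rfl; intro j _
    rw [← Finset.sum_add_distrib]
    apply Finset.sum_congr rfl; intro m _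
    rw [hFstep m s]
    ring
  have hΨneg : ∀ (s : ℕ) (t : ℝ),
      PsiAux M e F (-(s : ℝ)) t = -∑ l ∈ Finset.range s, GAux M e (-(l : ℝ) - 1) t := by
    intro s t
    induction s with
    | zero => simpa using hΨ0 t
    | succ n ih =>
      have h3 := hΨstep (-(n : ℝ) - 1) t
      rw [show (-(n : ℝ) - 1 + 1) = -(n : ℝ) by ring] at h3
      rw [show (-((n + 1 : ℕ) : ℝ)) = -(n : ℝ) - 1 by push_cast; ring]
      rw [Finset.sum_range_succ]
      have h3' : PsiAux M e F (-(n : ℝ) - 1) t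
          = PsiAux M e F (-(n : ℝ)) t - GAux M e (-(n : ℝ) - 1) t := by linarith
      rw [h3', ih]
      ring
  have hHomNat : ∀ (k s : ℕ) (t : ℤ), PsiAux M e F ((s : ℝ) * (k : ℝ)) ((t : ℝ) * (k : ℝ))
      = (k : ℝ) ^ i * PsiAux M e F (s : ℝ) (t : ℝ) := by
    intro k s t
    have hcast1 : ((s : ℝ) * (k : ℝ)) = ((k * s : ℕ) : ℝ) := by push_cast; ring
    have hcast2 : ((t : ℝ) * (k : ℝ)) = (((k : ℤ) * t : ℤ) : ℝ) := by push_cast; ring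
    rw [hcast1, hcast2, hΨnat, hΨnat]
    have key : ∀ s' : ℕ, ∑ l ∈ Finset.range (k * s'), g (l : ℤ) ((k : ℤ) * t)
        = (k : ℝ) ^ i * ∑ l ∈ Finset.range s', g (l : ℤ) t := by
      intro s'
      induction s' with
      | zero => simp
      | succ n ih =>
        rw [Nat.mul_succ, sum_range_add', ih, Finset.sum_range_succ]
        have h4 : ∀ l ∈ Finset.range k, g ((k * n + l : ℕ) : ℤ) ((k : ℤ) * t)
            = g ((k : ℤ) * (n : ℤ) + (l : ℕ)) ((k : ℤ) * t) := by
          intro l _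
          congr 1 <;> push_cast <;> ring
        rw [Finset.sum_congr rfl h4, H1 k n t]
        ring
    exact key s
  have hHomNeg : ∀ (s : ℕ) (t : ℤ), PsiAux M e F (-(s : ℝ)) (-(t : ℝ))
      = (-1 : ℝ) ^ i * PsiAux M e F (s : ℝ) (t : ℝ) := by
    intro s t
    set u : Polynomial ℝ := (∑ j ∈ Finset.range (M + 1), ∑ m ∈ Finset.range (j + 1),
        Polynomial.C (e j m * (t : ℝ) ^ (j - m)) * ((F m).comp (Polynomial.C (s : ℝ) * Polynomial.X))
          * Polynomial.X ^ (j - m))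
        - Polynomial.C (PsiAux M e F (s : ℝ) (t : ℝ)) * Polynomial.X ^ i with hudef
    have hueval : ∀ x : ℝ, u.eval x
        = PsiAux M e F ((s : ℝ) * x) ((t : ℝ) * x) - PsiAux M e F (s : ℝ) (t : ℝ) * x ^ i := by
      intro x
      rw [hudef]
      simp only [Polynomial.eval_sub, Polynomial.eval_finset_sum, Polynomial.eval_mul,
        Polynomial.eval_C, Polynomial.eval_pow, Polynomial.eval_X, Polynomial.eval_comp]
      congr 1
      rw [PsiAux]
      apply Finset.sum_congr rfl; intro j _
      apply Finset.sum_congr rfl; intro m _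
      rw [mul_pow]
      ring
    have hu0 : u = 0 := by
      apply natRoots_zero
      intro n
      rw [hueval, hHomNat n s t]
      ring
    have h9 := hueval (-1)
    rw [hu0] at h9
    simp only [Polynomial.eval_zero] at h9
    rw [show ((s : ℝ) * (-1 : ℝ)) = -(s : ℝ) by ring,
      show ((t : ℝ) * (-1 : ℝ)) = -(t : ℝ) by ring] at h9
    linear_combination -h9
  have hRefl : ∀ (s : ℕ) (t : ℤ), PsiAux M e F (-(s : ℝ)) (-(t : ℝ))
      = -((-1 : ℝ) ^ i * PsiAux M e F (s : ℝ) (t : ℝ)) := by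
    intro s t
    rw [hΨneg s (-(t : ℝ))]
    have h10 : ∀ l ∈ Finset.range s, GAux M e (-(l : ℝ) - 1) (-(t : ℝ))
        = (-1 : ℝ) ^ i * g (l : ℤ) t := by
      intro l _
      have h11 := H2 (l : ℤ) t
      rw [show (-(l : ℝ) - 1) = ((-(l : ℤ) - 1 : ℤ) : ℝ) by push_cast; ring,
        show (-(t : ℝ)) = ((-t : ℤ) : ℝ) by push_cast; ring, hGg, h11]
    rw [Finset.sum_congr rfl h10, ← Finset.mul_sum, ← hΨnat s t]
  have hΨzero : ∀ (s : ℕ) (t : ℤ), PsiAux M e F (s : ℝ) (t : ℝ) = 0 := by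
    intro s t
    have hA := hHomNeg s t
    have hB := hRefl s t
    have h13 : (-1 : ℝ) ^ i * PsiAux M e F (s : ℝ) (t : ℝ) = 0 := by linarith
    rcases mul_eq_zero.mp h13 with h | h
    · exact absurd h (pow_ne_zero _ (by norm_num))
    · exact h
  have hgnn : ∀ (n : ℕ) (t : ℤ), g (n : ℤ) t = 0 := by
    intro n t
    have h14 := hΨnat (n + 1) t
    rw [Finset.sum_range_succ] at h14
    have h15 := hΨnat n t
    rw [hΨzero] at h14 h15
    rw [← h15] at h14
    linarith
  intro x y
  rcases le_or_gt 0 x with hx | hx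
  · obtain ⟨n, rfl⟩ := Int.eq_ofNat_of_zero_le hx
    exact hgnn n y
  · have h16 := H2 (-x - 1) (-y)
    rw [show -(-x - 1) - 1 = x by ring, show -(-y) = y by ring] at h16
    obtain ⟨n, hn⟩ := Int.eq_ofNat_of_zero_le (show 0 ≤ -x - 1 by omega)
    rw [h16, hn, hgnn n (-y), mul_zero]
-- Part D: geometry toolkit

lemma toVec_add (a b : IVec) : toVec (a + b) = toVec a + toVec b := by
  funext i; simp [toVec]

lemma toVec_zero : toVec 0 = 0 := by
  funext i; simp [toVec]

lemma toVec_neg (a : IVec) : toVec (-a) = -toVec a := by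
  funext i; simp [toVec]

lemma toVec_nsmul (m : ℕ) (v : IVec) : toVec (m • v) = (m : ℝ) • toVec v := by
  funext i; simp [toVec]

/-- the real vector e₁ -/
def e1v : Vec := toVec ie1

lemma e1v_zero : e1v 0 = 1 := by simp [e1v, toVec, ie1]

lemma matVec_toVec (φ : Matrix (Fin 2) (Fin 2) ℤ) (v : IVec) :
    matVecMap φ (toVec v) = toVec (φ.mulVec v) := by
  funext i
  simp [matVecMap, toVec, Matrix.mulVec, dotProduct, Matrix.map_apply,
    Fin.sum_univ_two]

/-- the lattice segment `[a, b]` as a lattice polygon -/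
def segLP2 (a b : IVec) : LP :=
  ⟨segment ℝ (toVec a) (toVec b), {a, b}, ⟨a, by simp⟩, by
    rw [Finset.coe_insert, Finset.coe_singleton, Set.image_insert_eq, Set.image_singleton,
      convexHull_pair]⟩

lemma segLP2_val (a b : IVec) : (segLP2 a b).val = segment ℝ (toVec a) (toVec b) := rfl

/-- the lattice point `{v}` as a lattice polygon -/
def ptv (v : IVec) : LP := segLP2 v v

lemma ptv_val (v : IVec) : (ptv v).val = {toVec v} := segment_same ℝ _

/-- horizontal lattice segment from `c` to `c + m e₁` -/
def HSg (c : IVec) (m : ℕ) : LP := segLP2 c (c + m • ie1)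

lemma HSg_val (c : IVec) (m : ℕ) :
    (HSg c m).val = segment ℝ (toVec c) (toVec c + (m : ℝ) • e1v) := by
  rw [HSg, segLP2_val, toVec_add, toVec_nsmul]
  rfl

-- segment decomposition lemmas

lemma lineMap_seg (p d : Vec) (β : ℝ) :
    (AffineMap.lineMap p (p + d) : ℝ →ᵃ[ℝ] Vec) β = p + β • d := by
  rw [AffineMap.lineMap_apply_module']
  rw [add_sub_cancel_left]
  abel

lemma seg_param (p : Vec) (d : Vec) {α γ : ℝ} (h : α ≤ γ) :
    segment ℝ (p + α • d) (p + γ • d) = (AffineMap.lineMap p (p + d)) '' Set.Icc α γ := by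
  rw [← segment_eq_Icc h, image_segment, lineMap_seg, lineMap_seg]

lemma lineMap_inj (p : Vec) (d : Vec) (hd : d 0 ≠ 0) :
    Function.Injective (AffineMap.lineMap p (p + d) : ℝ →ᵃ[ℝ] Vec) := by
  intro s t hst
  rw [lineMap_seg, lineMap_seg] at hst
  have h0 := congrFun hst 0
  simp only [Pi.add_apply, Pi.smul_apply, smul_eq_mul] at h0
  have h0' : s * d 0 = t * d 0 := by linarith
  exact mul_right_cancel₀ hd h0'

lemma seg_union (p : Vec) (d : Vec) {α β γ : ℝ} (h1 : α ≤ β) (h2 : β ≤ γ) :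
    segment ℝ (p + α • d) (p + γ • d)
      = segment ℝ (p + α • d) (p + β • d) ∪ segment ℝ (p + β • d) (p + γ • d) := by
  rw [seg_param p d (h1.trans h2), seg_param p d h1, seg_param p d h2, ← Set.image_union,
    Set.Icc_union_Icc_eq_Icc h1 h2]

lemma seg_inter (p : Vec) (d : Vec) (hd : d 0 ≠ 0) {α β γ : ℝ} (h1 : α ≤ β) (h2 : β ≤ γ) :
    segment ℝ (p + α • d) (p + β • d) ∩ segment ℝ (p + β • d) (p + γ • d)
      = {p + β • d} := by
  rw [seg_param p d h1, seg_param p d h2, ← Set.image_inter (lineMap_inj p d hd),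
    Set.Icc_inter_Icc, max_eq_right h1, min_eq_left h2, Set.Icc_self, Set.image_singleton,
    lineMap_seg]

lemma translate_segment (v : IVec) (a b : Vec) :
    translateSet v (segment ℝ a b) = segment ℝ (a + toVec v) (b + toVec v) := by
  unfold translateSet
  have h : (fun p : Vec => p + toVec v)
      = ((AffineMap.id ℝ Vec) + AffineMap.const ℝ Vec (toVec v) : Vec →ᵃ[ℝ] Vec) := by
    funext p
    simp
  rw [h, image_segment]
  try simp

lemma dilate_segment (m : ℕ) (a b : Vec) :
    dilateSet m (segment ℝ a b) = segment ℝ ((m : ℝ) • a) ((m : ℝ) • b) := by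
  unfold dilateSet
  have h : (fun p : Vec => (m : ℝ) • p) = ⇑((LinearMap.lsmul ℝ Vec (m : ℝ)).toAffineMap) := by
    funext p; simp
  rw [h, image_segment]
  try simp

lemma mat_segment (φ : Matrix (Fin 2) (Fin 2) ℤ) (a b : Vec) :
    matSet φ (segment ℝ a b) = segment ℝ (matVecMap φ a) (matVecMap φ b) := by
  unfold matSet
  have h : (matVecMap φ) = ⇑(((φ.map fun x : ℤ => (x : ℝ)).mulVecLin).toAffineMap) := by
    funext p; simp [matVecMap]
  rw [h, image_segment]
  try simp [matVecMap]

lemma translate_singleton (v : IVec) (x : Vec) :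
    translateSet v {x} = {x + toVec v} := by
  unfold translateSet
  rw [Set.image_singleton]

lemma dilate_singleton (m : ℕ) (x : Vec) :
    dilateSet m {x} = {(m : ℝ) • x} := by
  unfold dilateSet
  rw [Set.image_singleton]

lemma mat_singleton (φ : Matrix (Fin 2) (Fin 2) ℤ) (x : Vec) :
    matSet φ {x} = {matVecMap φ x} := by
  unfold matSet
  rw [Set.image_singleton]
-- Part E: valuation layer

lemma mem_seg_par (p d : Vec) {c1 c2 c3 : ℝ} (h1 : c1 ≤ c2) (h2 : c2 ≤ c3) :
    p + c2 • d ∈ segment ℝ (p + c1 • d) (p + c3 • d) := by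
  rw [seg_param p d (h1.trans h2)]
  exact ⟨c2, ⟨h1, h2⟩, lineMap_seg p d c2⟩

lemma hsep (c : IVec) (n : ℕ) : toVec (c + n • ie1) = toVec c + (n : ℝ) • e1v := by
  rw [toVec_add, toVec_nsmul]; rfl

lemma hs_val_norm (c : IVec) (m : ℕ) :
    (HSg c m).val = segment ℝ (toVec c + (0 : ℝ) • e1v) (toVec c + (m : ℝ) • e1v) := by
  rw [HSg_val, zero_smul, add_zero]

lemma hs_zero_eq_pt (c : IVec) : HSg c 0 = ptv c := by
  apply Subtype.ext
  rw [HSg_val, ptv_val]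
  rw [Nat.cast_zero, zero_smul, add_zero, segment_same]

lemma hs_additive (Z : LP → MvPolynomial (Fin 2) ℝ) (hval : IsValuation Z)
    (hpt : ∀ w : IVec, Z (ptv w) = 0) (c : IVec) (m : ℕ) :
    Z (HSg c m) = ∑ l ∈ Finset.range m, Z (HSg (c + l • ie1) 1) := by
  induction m with
  | zero =>
    rw [Finset.range_zero, Finset.sum_empty, hs_zero_eq_pt, hpt]
  | succ n ih =>
    have hn1 : toVec c + (n : ℝ) • e1v + ((1 : ℕ) : ℝ) • e1v
        = toVec c + ((n + 1 : ℕ) : ℝ) • e1v := by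
      push_cast
      rw [add_smul, one_smul, add_assoc]
    have hn0 : toVec c + (n : ℝ) • e1v + (0 : ℝ) • e1v = toVec c + (n : ℝ) • e1v := by
      rw [zero_smul, add_zero]
    have hU : (HSg c (n + 1)).val = (HSg c n).val ∪ (HSg (c + n • ie1) 1).val := by
      rw [hs_val_norm, hs_val_norm, hs_val_norm, hsep, hn0, hn1]
      exact seg_union (toVec c) e1v (by positivity) (by push_cast; linarith)
    have hI : (ptv (c + n • ie1)).val = (HSg c n).val ∩ (HSg (c + n • ie1) 1).val := by
      rw [hs_val_norm, hs_val_norm, ptv_val, hsep, hn0, hn1]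
      exact (seg_inter (toVec c) e1v (by rw [e1v_zero]; norm_num)
        (by positivity) (by push_cast; linarith)).symm
    have hv := hval (HSg c n) (HSg (c + n • ie1) 1) (HSg c (n + 1)) (ptv (c + n • ie1))
      hU hI
    rw [hpt, add_zero] at hv
    rw [← hv, ih, Finset.sum_range_succ]

lemma linPoly_eq (v : IVec) :
    linPoly v = ((v 0 : ℝ)) • (X 0 : MvPolynomial (Fin 2) ℝ) + ((v 1 : ℝ)) • X 1 := by
  rw [linPoly, Fin.sum_univ_two]

lemma segLP_val : segLP.val = segment ℝ (toVec iz0) (toVec ie1) := by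
  show convexHull ℝ (toVec '' (({iz0, ie1} : Finset IVec) : Set IVec)) = _
  rw [Finset.coe_insert, Finset.coe_singleton, Set.image_insert_eq, Set.image_singleton,
    convexHull_pair]

lemma toVec_iz0 : toVec iz0 = 0 := by
  funext j; fin_cases j <;> simp [toVec, iz0]

lemma points_vanish (i r : ℕ) (hlt : i < r)
    (Z : LP → MvPolynomial (Fin 2) ℝ)
    (hhom : ∀ P, (Z P).IsHomogeneous r)
    (hequi : IsEquivariant Z)
    (A : ℕ → LP → MvPolynomial (Fin 2) ℝ)
    (hAtr : ∀ (P Q : LP) (v : IVec), Q.val = translateSet v P.val →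
      Z Q = ∑ j ∈ Finset.range (r + 1), ((j.factorial : ℝ)⁻¹) • (A j P * linPoly v ^ j))
    (hdil : IsHomogeneousVal i Z) :
    ∀ w : IVec, Z (ptv w) = 0 := by
  have hform : ∀ v : IVec, Z (ptv v)
      = ∑ j ∈ Finset.range (r + 1), ((j.factorial : ℝ)⁻¹) • (A j (ptv 0) * linPoly v ^ j) := by
    intro v
    apply hAtr (ptv 0) (ptv v) v
    rw [ptv_val, ptv_val, translate_singleton, toVec_zero, zero_add]
  have hdilpt : ∀ (k : ℕ) (v : IVec), Z (ptv (k • v)) = (k : ℝ) ^ i • Z (ptv v) := by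
    intro k v
    apply hdil k (ptv v) (ptv (k • v))
    rw [ptv_val, ptv_val, dilate_singleton, toVec_nsmul]
  have hlink : ∀ (k : ℕ) (v : IVec), linPoly (k • v) = (k : ℝ) • linPoly v := by
    intro k v
    rw [linPoly, linPoly, Finset.smul_sum]
    apply Finset.sum_congr rfl
    intro j _
    rw [smul_smul]
    congr 1
    simp
  -- extraction of homogeneous components
  have hws : ∀ v : IVec, Z (ptv v)
      = ((i.factorial : ℝ)⁻¹) • (A i (ptv 0) * linPoly v ^ i) := by
    intro v
    have hkey : ∀ k : ℕ, ∑ j ∈ Finset.range (r + 1), (k : ℝ) ^ j •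
        ((((j.factorial : ℝ)⁻¹) • (A j (ptv 0) * linPoly v ^ j))
          - (if j = i then Z (ptv v) else 0)) = 0 := by
      intro k
      rw [Finset.sum_congr rfl (fun j _ => smul_sub ((k : ℝ) ^ j) _ _), Finset.sum_sub_distrib]
      have h1 : ∑ j ∈ Finset.range (r + 1), (k : ℝ) ^ j •
          (if j = i then Z (ptv v) else 0) = (k : ℝ) ^ i • Z (ptv v) := by
        rw [Finset.sum_eq_single i]
        · rw [if_pos rfl]
        · intro b _ hb
          rw [if_neg hb, smul_zero]
        · intro hni
          exact absurd (Finset.mem_range.mpr (by omega)) hni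
      have h2 : ∑ j ∈ Finset.range (r + 1), (k : ℝ) ^ j •
          (((j.factorial : ℝ)⁻¹) • (A j (ptv 0) * linPoly v ^ j)) = Z (ptv (k • v)) := by
        rw [hform (k • v)]
        apply Finset.sum_congr rfl
        intro j _
        rw [hlink, smul_pow, mul_smul_comm, smul_smul, smul_smul, mul_comm]
      rw [h1, h2, hdilpt k v, sub_self]
    have hvan := vanishV r (fun j => (((j.factorial : ℝ)⁻¹) • (A j (ptv 0) * linPoly v ^ j))
        - (if j = i then Z (ptv v) else 0)) hkey i (le_of_lt hlt)
    rw [sub_eq_zero, if_pos rfl] at hvan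
    exact hvan.symm
  -- shear invariance at e1
  have hfix : ∀ n : ℤ, polyAct !![1, n; 0, 1] (Z (ptv ie1)) = Z (ptv ie1) := by
    intro n
    have hdet : IsUnit (!![1, n; 0, 1] : Matrix (Fin 2) (Fin 2) ℤ).det := by
      rw [Matrix.det_fin_two_of]; simp
    refine (hequi _ hdet (ptv ie1) (ptv ie1) ?_).symm
    rw [ptv_val, mat_singleton, matVec_toVec,
      show (!![1, n; 0, 1] : Matrix (Fin 2) (Fin 2) ℤ).mulVec ie1 = ie1 by
        funext j; fin_cases j <;>
          simp [Matrix.mulVec, dotProduct, Fin.sum_univ_two, ie1]]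
  obtain ⟨c, hcq⟩ := shear_invariant r (Z (ptv ie1)) (hhom _) hfix
  -- swap
  have hswap : Z (ptv ie2) = polyAct swapMat (Z (ptv ie1)) := by
    apply hequi swapMat ?_ (ptv ie1) (ptv ie2) ?_
    · rw [swapMat, Matrix.det_fin_two_of]
      norm_num
    · rw [ptv_val, ptv_val, mat_singleton, matVec_toVec,
        show swapMat.mulVec ie1 = ie2 by
          funext j; fin_cases j <;>
            simp [Matrix.mulVec, dotProduct, Fin.sum_univ_two, ie1, ie2, swapMat]]
  have hlin1 : linPoly ie1 = (X 0 : MvPolynomial (Fin 2) ℝ) := by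
    rw [linPoly_eq]
    simp [ie1]
  have hlin2 : linPoly ie2 = (X 1 : MvPolynomial (Fin 2) ℝ) := by
    rw [linPoly_eq]
    simp [ie2]
  have hfact : ((i.factorial : ℝ)) ≠ 0 := by
    exact_mod_cast i.factorial_ne_zero
  have e1eq : A i (ptv 0) * (X 0 : MvPolynomial (Fin 2) ℝ) ^ i
      = ((i.factorial : ℝ) * c) • ((X 0 : MvPolynomial (Fin 2) ℝ) ^ r) := by
    have h3 := hws ie1
    rw [hlin1, hcq] at h3
    have h4 := congrArg (fun q => (i.factorial : ℝ) • q) h3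
    simp only [smul_smul] at h4
    rw [mul_inv_cancel₀ hfact, one_smul] at h4
    exact h4.symm
  have e2eq : A i (ptv 0) * (X 1 : MvPolynomial (Fin 2) ℝ) ^ i
      = ((i.factorial : ℝ) * c) • ((X 1 : MvPolynomial (Fin 2) ℝ) ^ r) := by
    have h3 := hws ie2
    rw [hlin2, hswap, hcq] at h3
    have h5 : polyAct swapMat (c • (X 0 : MvPolynomial (Fin 2) ℝ) ^ r)
        = c • (X 1 : MvPolynomial (Fin 2) ℝ) ^ r := by
      rw [polyAct, _root_.map_smul, map_pow, aeval_X]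
      rw [show (∑ j, ((swapMat j 0 : ℤ) : ℝ) • (X j : MvPolynomial (Fin 2) ℝ)) = X 1 by
        rw [Fin.sum_univ_two]; simp [swapMat]]
    rw [h5] at h3
    have h4 := congrArg (fun q => (i.factorial : ℝ) • q) h3
    simp only [smul_smul] at h4
    rw [mul_inv_cancel₀ hfact, one_smul] at h4
    exact h4.symm
  -- cross multiply
  have h7 : ((i.factorial : ℝ) * c) • ((X 0 : MvPolynomial (Fin 2) ℝ) ^ r * X 1 ^ i)
      = ((i.factorial : ℝ) * c) • ((X 0 : MvPolynomial (Fin 2) ℝ) ^ i * X 1 ^ r) := by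
    have h5 := congrArg (· * (X 1 : MvPolynomial (Fin 2) ℝ) ^ i) e1eq
    have h6 := congrArg (· * (X 0 : MvPolynomial (Fin 2) ℝ) ^ i) e2eq
    simp only [smul_mul_assoc] at h5 h6
    calc ((i.factorial : ℝ) * c) • ((X 0 : MvPolynomial (Fin 2) ℝ) ^ r * X 1 ^ i)
        = A i (ptv 0) * (X 0 : MvPolynomial (Fin 2) ℝ) ^ i * X 1 ^ i := h5.symm
      _ = A i (ptv 0) * (X 1 : MvPolynomial (Fin 2) ℝ) ^ i * X 0 ^ i := by ring
      _ = ((i.factorial : ℝ) * c) • ((X 1 : MvPolynomial (Fin 2) ℝ) ^ r * X 0 ^ i) := h6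
      _ = ((i.factorial : ℝ) * c) • ((X 0 : MvPolynomial (Fin 2) ℝ) ^ i * X 1 ^ r) := by
          rw [mul_comm ((X 1 : MvPolynomial (Fin 2) ℝ) ^ r)]
  have hc0 : c = 0 := by
    have h8 := congrArg (coeff (Finsupp.single (0 : Fin 2) r + Finsupp.single 1 i)) h7
    rw [coeff_smul, coeff_smul] at h8
    rw [X_pow_eq_monomial, X_pow_eq_monomial, monomial_mul, mul_one] at h8
    rw [X_pow_eq_monomial, X_pow_eq_monomial, monomial_mul, mul_one] at h8
    rw [coeff_monomial, coeff_monomial, if_pos rfl, if_neg ?_] at h8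
    · have : (i.factorial : ℝ) * c = 0 := by
        simpa using h8
      rcases mul_eq_zero.mp this with h | h
      · exact absurd h hfact
      · exact h
    · intro hcon
      have := congrFun (congrArg (fun f : Fin 2 →₀ ℕ => (f : Fin 2 → ℕ)) hcon) 0
      simp [Finsupp.single_apply] at this
      omega
  have hA0 : A i (ptv 0) = 0 := by
    have := e1eq
    rw [hc0, mul_zero, zero_smul] at this
    rcases mul_eq_zero.mp this with h | h
    · exact h
    · exact absurd h (pow_ne_zero _ (MvPolynomial.X_ne_zero 0))
  intro w
  rw [hws w, hA0, zero_mul, smul_zero]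
-- Part F: classification of dimension ≤ 1 lattice polygons

lemma classify_dim_le_one (P : LP) (hdim : DimAtMostOne P.val) :
    ∃ a b : IVec, P.val = segment ℝ (toVec a) (toVec b) := by
  obtain ⟨S, hSne, hSP⟩ := P.2
  obtain ⟨s₀, hs₀⟩ := hSne
  by_cases hall : ∀ s ∈ S, toVec s = toVec s₀
  · refine ⟨s₀, s₀, ?_⟩
    rw [segment_same, hSP]
    have himg : toVec '' (S : Set IVec) = {toVec s₀} := by
      apply Set.eq_singleton_iff_nonempty_unique_mem.mpr
      exact ⟨⟨toVec s₀, ⟨s₀, hs₀, rfl⟩⟩, by rintro x ⟨s, hs, rfl⟩; exact hall s hs⟩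
    rw [himg, convexHull_singleton]
  · push_neg at hall
    obtain ⟨s₁, hs₁, hne⟩ := hall
    set w : Vec := toVec s₁ - toVec s₀ with hw
    have hw0 : w ≠ 0 := sub_ne_zero_of_ne hne
    have hmem : ∀ s ∈ S, toVec s ∈ P.val := by
      intro s hs
      rw [hSP]
      exact subset_convexHull ℝ _ ⟨s, hs, rfl⟩
    have hspan : ∀ x y : Vec, x ∈ P.val → y ∈ P.val → x - y ∈ vectorSpan ℝ P.val := by
      intro x y hx hy
      exact vsub_mem_vectorSpan ℝ hx hy
    have hcoll : ∀ s ∈ S, ∃ c : ℝ, toVec s - toVec s₀ = c • w := by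
      intro s hs
      by_contra hnc
      push_neg at hnc
      have huW : toVec s - toVec s₀ ∈ vectorSpan ℝ P.val :=
        hspan _ _ (hmem s hs) (hmem s₀ hs₀)
      have hwW : w ∈ vectorSpan ℝ P.val := hspan _ _ (hmem s₁ hs₁) (hmem s₀ hs₀)
      have hli : LinearIndependent ℝ
          ![(⟨toVec s - toVec s₀, huW⟩ : vectorSpan ℝ P.val), ⟨w, hwW⟩] := by
        rw [linearIndependent_fin2]
        constructor
        · simp only [Matrix.cons_val_one, Matrix.cons_val_zero, Matrix.head_cons, ne_eq, Submodule.mk_eq_zero]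
          exact hw0
        · intro a hea
          apply hnc a
          have h2 := congrArg (Subtype.val) hea
          simp only [Matrix.cons_val_one, Matrix.head_cons, Matrix.cons_val_zero,
            SetLike.mk_smul_mk] at h2
          exact h2.symm
      have h3 := hli.cardinal_le_rank
      rw [Cardinal.mk_fin] at h3
      have h4 := h3.trans hdim
      rw [show ((1 : Cardinal)) = ((1 : ℕ) : Cardinal) by norm_cast] at h4
      have h5 := Nat.cast_le.mp h4
      omega
    obtain ⟨i₀, hi₀⟩ : ∃ i₀, w i₀ ≠ 0 := by
      by_contra hcon
      push_neg at hcon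
      exact hw0 (funext fun j => hcon j)
    set cf : IVec → ℝ := fun s => (toVec s i₀ - toVec s₀ i₀) / w i₀ with hcf
    have hcfs : ∀ s ∈ S, toVec s = toVec s₀ + cf s • w := by
      intro s hs
      obtain ⟨c, hc⟩ := hcoll s hs
      have hcc : cf s = c := by
        rw [hcf]
        have h6 := congrFun hc i₀
        simp only [Pi.sub_apply, Pi.smul_apply, smul_eq_mul] at h6
        field_simp
        linarith
      rw [hcc, ← hc]
      abel
    obtain ⟨smin, hsminS, hsmin⟩ := S.exists_min_image cf ⟨s₀, hs₀⟩
    obtain ⟨smax, hsmaxS, hsmax⟩ := S.exists_max_image cf ⟨s₀, hs₀⟩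
    refine ⟨smin, smax, ?_⟩
    rw [hSP]
    apply Set.Subset.antisymm
    · apply convexHull_min
      · rintro x ⟨s, hs, rfl⟩
        rw [hcfs s hs, hcfs smin hsminS, hcfs smax hsmaxS]
        exact mem_seg_par (toVec s₀) w (hsmin s hs) (hsmax s hs)
      · exact convex_segment _ _
    · have h7 : toVec smin ∈ convexHull ℝ (toVec '' (S : Set IVec)) :=
        subset_convexHull ℝ _ ⟨smin, hsminS, rfl⟩
      have h8 : toVec smax ∈ convexHull ℝ (toVec '' (S : Set IVec)) :=
        subset_convexHull ℝ _ ⟨smax, hsmaxS, rfl⟩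
      exact (convex_convexHull ℝ _).segment_subset h7 h8

-- Part G: Bezout reduction of a lattice segment to a horizontal one

lemma seg_reduce (a b : IVec) (hab : a ≠ b) :
    ∃ (φ : Matrix (Fin 2) (Fin 2) ℤ) (c : IVec) (k : ℕ), IsUnit φ.det ∧
      segment ℝ (toVec a) (toVec b) = matSet φ (HSg c k).val := by
  set u : IVec := b - a with hu
  have hu0 : ¬(u 0 = 0 ∧ u 1 = 0) := by
    rintro ⟨h0, h1⟩
    apply hab
    have : u = 0 := funext fun j => by fin_cases j <;> assumption
    have h2 : b - a = 0 := this
    funext j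
    have := congrFun h2 j
    simp only [Pi.sub_apply, Pi.zero_apply, sub_eq_zero] at this
    exact this.symm
  set g : ℕ := Int.gcd (u 0) (u 1) with hg
  have hgpos : 0 < g := by
    rcases Nat.eq_zero_or_pos g with h | h
    · exfalso
      apply hu0
      rw [hg] at h
      exact ⟨Int.gcd_eq_zero_iff.mp h |>.1, Int.gcd_eq_zero_iff.mp h |>.2⟩
    · exact h
  have hgne : ((g : ℤ)) ≠ 0 := by exact_mod_cast hgpos.ne'
  set w0 : ℤ := u 0 / g with hw0
  set w1 : ℤ := u 1 / g with hw1
  have hw0g : (g : ℤ) * w0 = u 0 := Int.mul_ediv_cancel' (Int.gcd_dvd_left _ _)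
  have hw1g : (g : ℤ) * w1 = u 1 := Int.mul_ediv_cancel' (Int.gcd_dvd_right _ _)
  set ca : ℤ := Int.gcdA (u 0) (u 1) with hca
  set cb : ℤ := Int.gcdB (u 0) (u 1) with hcb
  have hbez : w0 * ca + w1 * cb = 1 := by
    have h := Int.gcd_eq_gcd_ab (u 0) (u 1)
    have h2 : (g : ℤ) * (w0 * ca + w1 * cb) = (g : ℤ) * 1 := by
      rw [mul_one]
      calc (g : ℤ) * (w0 * ca + w1 * cb)
          = ((g : ℤ) * w0) * ca + ((g : ℤ) * w1) * cb := by ring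
        _ = u 0 * ca + u 1 * cb := by rw [hw0g, hw1g]
        _ = (g : ℤ) := h.symm
    exact mul_left_cancel₀ hgne h2
  set φ : Matrix (Fin 2) (Fin 2) ℤ := !![w0, -cb; w1, ca] with hφ
  set ψ : Matrix (Fin 2) (Fin 2) ℤ := !![ca, cb; -w1, w0] with hψ
  have hdet : IsUnit φ.det := by
    rw [hφ, Matrix.det_fin_two_of]
    rw [show w0 * ca - -cb * w1 = 1 by linarith [hbez]]
    exact isUnit_one
  have hφψ : φ * ψ = 1 := by
    ext ii jj
    fin_cases ii <;> fin_cases jj <;>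
      simp [hφ, hψ, Matrix.mul_apply, Fin.sum_univ_two, Matrix.one_apply] <;> linarith [hbez]
  set c : IVec := ψ.mulVec a with hc
  refine ⟨φ, c, g, hdet, ?_⟩
  have hval : (HSg c g).val = segment ℝ (toVec c) (toVec (c + g • ie1)) := rfl
  rw [hval, mat_segment, matVec_toVec, matVec_toVec]
  have hca' : φ.mulVec c = a := by
    rw [hc, Matrix.mulVec_mulVec, hφψ, Matrix.one_mulVec]
  have hcb' : φ.mulVec (c + g • ie1) = b := by
    have hsm : (g • ie1 : IVec) = (g : ℤ) • ie1 := by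
      funext j
      simp
    rw [Matrix.mulVec_add, hca', hsm, Matrix.mulVec_smul]
    have hwcol : φ.mulVec ie1 = ![w0, w1] := by
      funext j
      fin_cases j <;> simp [hφ, Matrix.mulVec, dotProduct, Fin.sum_univ_two, ie1]
    rw [hwcol]
    have h00 : (g : ℤ) * w0 = b 0 - a 0 := by rw [hw0g]; simp [hu]
    have h11 : (g : ℤ) * w1 = b 1 - a 1 := by rw [hw1g]; simp [hu]
    funext j
    fin_cases j <;> simp <;> linarith [h00, h11]
  rw [hca', hcb']

end

/-- Lemma 10: if `r - i > 0` is even and `i ≥ 1`, every `Z ∈ Val_i^r` is simple. -/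
theorem simple_of_even_diff (i r : ℕ) (hi : 1 ≤ i) (hlt : i < r) (he : Even (r - i))
    (Z : LP → MvPolynomial (Fin 2) ℝ) (hZ : MemVal i r Z) : IsSimpleVal Z := by
  obtain ⟨hval, hhom, hequi, ⟨A, hA0, hAhom, hAtr⟩, hdil⟩ := hZ
  have hpt := points_vanish i r hlt Z hhom hequi A hAtr hdil
  have hpar : ((-1 : ℝ)) ^ r = (-1 : ℝ) ^ i := by
    rw [show r = i + (r - i) by omega, pow_add, Even.neg_one_pow he, mul_one]
  have hfP : ∀ v : IVec, Z (HSg v 1)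
      = ∑ j ∈ Finset.range (r + 1), ((j.factorial : ℝ)⁻¹) • (A j segLP * linPoly v ^ j) := by
    intro v
    apply hAtr segLP (HSg v 1) v
    have h1 : translateSet v segLP.val = segment ℝ (toVec v) (toVec (v + 1 • ie1)) := by
      rw [segLP_val, translate_segment, toVec_iz0, zero_add]
      congr 1
      rw [one_smul, toVec_add, add_comm]
    rw [h1]
    rfl
  have hf1 : ∀ (k : ℕ) (v : IVec),
      ∑ l ∈ Finset.range k, Z (HSg (k • v + l • ie1) 1) = (k : ℝ) ^ i • Z (HSg v 1) := by
    intro k v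
    rw [← hs_additive Z hval hpt (k • v) k]
    apply hdil k (HSg v 1) (HSg (k • v) k)
    show segment ℝ (toVec (k • v)) (toVec (k • v + k • ie1)) = dilateSet k (HSg v 1).val
    have h2 : (HSg v 1).val = segment ℝ (toVec v) (toVec (v + 1 • ie1)) := rfl
    rw [h2, dilate_segment, ← toVec_nsmul, ← toVec_nsmul]
    congr 2
    rw [smul_add, smul_smul, mul_one]
  have hf2 : ∀ v : IVec, Z (HSg (-v - ie1) 1) = ((-1 : ℝ) ^ i) • Z (HSg v 1) := by
    intro v
    have hdetn : IsUnit (negIdMat.det) := by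
      rw [negIdMat, Matrix.det_fin_two_of]
      norm_num
    have hset : (HSg (-v - ie1) 1).val = matSet negIdMat (HSg v 1).val := by
      have h2 : (HSg v 1).val = segment ℝ (toVec v) (toVec (v + 1 • ie1)) := rfl
      rw [h2, mat_segment, matVec_toVec, matVec_toVec]
      have hneg : ∀ x : IVec, negIdMat.mulVec x = -x := by
        intro x
        funext j
        fin_cases j <;>
          simp [negIdMat, Matrix.mulVec, dotProduct, Fin.sum_univ_two, Matrix.vecHead, Matrix.vecTail]
      simp only [hneg]
      have ha1 : (-v - ie1) + 1 • ie1 = -v := by rw [one_smul]; abel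
      have ha2 : -(v + 1 • ie1) = -v - ie1 := by rw [one_smul]; abel
      show segment ℝ (toVec (-v - ie1)) (toVec ((-v - ie1) + 1 • ie1)) = _
      rw [ha1, ha2]
      exact segment_symm ℝ _ _
    have h3 := hequi negIdMat hdetn (HSg v 1) (HSg (-v - ie1) 1) hset
    rw [h3, polyAct_negId (hhom _), hpar]
  have hf0 : ∀ v : IVec, Z (HSg v 1) = 0 := by
    have key : ∀ x y : ℤ, Z (HSg ![x, y] 1) = 0 := by
      intro x y
      apply MvPolynomial.ext
      intro d
      rw [MvPolynomial.coeff_zero]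
      have hg : ∀ x' y' : ℤ, coeff d (Z (HSg ![x', y'] 1)) = ∑ j ∈ Finset.range (r + 1),
          ∑ m ∈ Finset.range (j + 1),
            ((j.factorial : ℝ)⁻¹ * ((j.choose m : ℝ)
              * coeff d (A j segLP * ((X 0 : MvPolynomial (Fin 2) ℝ) ^ m * X 1 ^ (j - m)))))
            * (x' : ℝ) ^ m * (y' : ℝ) ^ (j - m) := by
        intro x' y'
        rw [hfP ![x', y'], MvPolynomial.coeff_sum]
        apply Finset.sum_congr rfl
        intro j _
        rw [MvPolynomial.coeff_smul, linPoly_eq]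
        rw [show ((![x', y'] : IVec) 0 : ℝ) = (x' : ℝ) by norm_num,
          show ((![x', y'] : IVec) 1 : ℝ) = (y' : ℝ) by norm_num]
        rw [lin_pow, Finset.mul_sum, MvPolynomial.coeff_sum, Finset.smul_sum]
        apply Finset.sum_congr rfl
        intro m _
        rw [mul_smul_comm, MvPolynomial.coeff_smul, smul_eq_mul, smul_eq_mul]
        ring
      have hH1 : ∀ (k : ℕ) (x' y' : ℤ), ∑ l ∈ Finset.range k,
          coeff d (Z (HSg ![(k : ℤ) * x' + (l : ℤ), (k : ℤ) * y'] 1))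
          = (k : ℝ) ^ i * coeff d (Z (HSg ![x', y'] 1)) := by
        intro k x' y'
        have h5 : ∀ l : ℕ, (k • (![x', y'] : IVec) + l • ie1)
            = ![(k : ℤ) * x' + (l : ℤ), (k : ℤ) * y'] := by
          intro l
          funext j
          fin_cases j <;> simp [ie1]
        have h4 := congrArg (coeff d) (hf1 k ![x', y'])
        rw [MvPolynomial.coeff_sum, MvPolynomial.coeff_smul] at h4
        simp only [h5] at h4
        exact h4
      have hH2 : ∀ x' y' : ℤ, coeff d (Z (HSg ![-x' - 1, -y'] 1))
          = (-1 : ℝ) ^ i * coeff d (Z (HSg ![x', y'] 1)) := by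
        intro x' y'
        have h6 : (-(![x', y'] : IVec) - ie1) = ![-x' - 1, -y'] := by
          funext j
          fin_cases j <;> simp [ie1]
        have h4 := congrArg (coeff d) (hf2 ![x', y'])
        rw [MvPolynomial.coeff_smul] at h4
        rw [h6] at h4
        exact h4
      exact core2 i r hi
        (fun j m => (j.factorial : ℝ)⁻¹ * ((j.choose m : ℝ)
          * coeff d (A j segLP * ((X 0 : MvPolynomial (Fin 2) ℝ) ^ m * X 1 ^ (j - m)))))
        (fun x' y' => coeff d (Z (HSg ![x', y'] 1))) hg hH1 hH2 x y
    intro v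
    have hv : ![v 0, v 1] = v := by
      funext j
      fin_cases j <;> rfl
    rw [← hv]
    exact key (v 0) (v 1)
  have hHS : ∀ (c : IVec) (m : ℕ), Z (HSg c m) = 0 := by
    intro c m
    rw [hs_additive Z hval hpt c m]
    apply Finset.sum_eq_zero
    intro l _
    exact hf0 _
  intro P hdim
  obtain ⟨a, b, hab⟩ := classify_dim_le_one P hdim
  by_cases hab0 : a = b
  · have hPeq : P = ptv a := by
      apply Subtype.ext
      rw [ptv_val, hab, hab0, segment_same]
    rw [hPeq]
    exact hpt a
  · obtain ⟨φ, c, k, hdet, hseg⟩ := seg_reduce a b hab0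
    have h7 := hequi φ hdet (HSg c k) P (by rw [hab, hseg])
    rw [h7, hHS, polyAct_zero]
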